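/- Among all k-element sub-multisets of a sorted list x_1 ≤ x_2 ≤ ... ≤ x_n of reals, a subset maximizing the population variance consists only of elements from the two tails: there exists i with 0 ≤ i ≤ k such that the subset {x_1,...,x_i, x_{n-(k-i)+1},...,x_n} achieves the maximum variance over all k-element subsets. -/

import Mathlib

open Finset

/-- Population variance of the sub-multiset of `x` indexed by a finite index set `s`. -/
noncomputable def svar {n : ℕ} (x : Fin n → ℝ) (s : Finset (Fin n)) : ℝ :=
  (∑ i ∈ s, x i ^ 2) / s.card - ((∑ i ∈ s, x i) / s.card) ^ 2

/-- `card * ∑ x² - (∑ x)²`, a scaled (un-normalized) variance. -/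
noncomputable def Fv {n : ℕ} (x : Fin n → ℝ) (s : Finset (Fin n)) : ℝ :=
  (s.card : ℝ) * (∑ i ∈ s, x i ^ 2) - (∑ i ∈ s, x i) ^ 2

/-- The "two tails" index set: the first `i` and the last `k - i` indices. -/
def Tset (n k i : ℕ) : Finset (Fin n) :=
  univ.filter (fun j : Fin n => (j : ℕ) < i ∨ n - (k - i) ≤ (j : ℕ))

lemma svar_eq_Fv {n k : ℕ} (hk : 0 < k) (x : Fin n → ℝ) (s : Finset (Fin n))
    (hs : s.card = k) : svar x s = Fv x s / (k : ℝ) ^ 2 := by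
  have hk' : (k : ℝ) ≠ 0 := Nat.cast_ne_zero.mpr hk.ne'
  rw [svar, Fv, hs]
  field_simp

lemma quad_le_max (A L a z b : ℝ) (hA : 0 ≤ A) (h1 : a ≤ z) (h2 : z ≤ b) :
    A * z ^ 2 - 2 * L * z ≤ max (A * a ^ 2 - 2 * L * a) (A * b ^ 2 - 2 * L * b) := by
  rcases le_or_gt (A * (a + z)) (2 * L) with h | h
  · refine le_trans ?_ (le_max_left _ _)
    nlinarith [mul_nonneg hA (sub_nonneg.2 h1), mul_nonneg (sub_nonneg.2 h1) (sub_nonneg.2 h2)]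
  · refine le_trans ?_ (le_max_right _ _)
    nlinarith [mul_nonneg hA (sub_nonneg.2 h2), mul_nonneg hA (sub_nonneg.2 (h1.trans h2)),
      mul_nonneg (mul_nonneg hA (sub_nonneg.2 h1)) (sub_nonneg.2 h2)]

lemma Fv_insert {n : ℕ} (x : Fin n → ℝ) {t : Finset (Fin n)} {a : Fin n} (ha : a ∉ t) :
    Fv x (insert a t) = ((t.card : ℝ) * (x a) ^ 2 - 2 * (∑ i ∈ t, x i) * (x a)) +
      (((t.card : ℝ) + 1) * (∑ i ∈ t, x i ^ 2) - (∑ i ∈ t, x i) ^ 2) := by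
  rw [Fv, Finset.sum_insert ha, Finset.sum_insert ha, Finset.card_insert_of_notMem ha]
  push_cast
  ring

/-- Swapping an interior element `q` of `s` for one of two outside elements `u < q < v`
does not decrease `Fv`, for at least one of the two choices (convexity). -/
lemma Fv_swap {n : ℕ} (x : Fin n → ℝ) (hmono : Monotone x) (s : Finset (Fin n))
    (q u v : Fin n) (hq : q ∈ s) (hu : u ∉ s) (hv : v ∉ s) (huq : u < q) (hqv : q < v) :
    Fv x s ≤ Fv x (insert u (s.erase q)) ∨ Fv x s ≤ Fv x (insert v (s.erase q)) := by
  set t := s.erase q with ht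
  have hqt : q ∉ t := Finset.notMem_erase _ _
  have hut : u ∉ t := fun h => hu (Finset.mem_of_mem_erase h)
  have hvt : v ∉ t := fun h => hv (Finset.mem_of_mem_erase h)
  have hs : s = insert q t := (Finset.insert_erase hq).symm
  rw [hs, Fv_insert x hqt, Fv_insert x hut, Fv_insert x hvt]
  have key := quad_le_max (t.card : ℝ) (∑ i ∈ t, x i) (x u) (x q) (x v)
    (Nat.cast_nonneg _) (hmono huq.le) (hmono hqv.le)
  rcases le_max_iff.mp key with h | h
  · exact Or.inl (by linarith)
  · exact Or.inr (by linarith)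

lemma card_Tset {n k i : ℕ} (hk : 0 < k) (hkn : k < n) (hik : i ≤ k) :
    (Tset n k i).card = k := by
  by_cases hik' : i = k
  · subst hik'
    have : Tset n i i = Iio (⟨i, hkn⟩ : Fin n) := by
      ext j
      simp only [Tset, mem_filter, mem_univ, true_and, mem_Iio, Fin.lt_def]
      omega
    rw [this, Fin.card_Iio]
  · have hik2 : i < k := lt_of_le_of_ne hik hik'
    have hin : i < n := lt_trans hik2 hkn
    have hA : n - (k - i) < n := by omega
    have : Tset n k i = Iio (⟨i, hin⟩ : Fin n) ∪ Ici (⟨n - (k - i), hA⟩ : Fin n) := by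
      ext j
      simp only [Tset, mem_filter, mem_univ, true_and, mem_union, mem_Iio, mem_Ici,
        Fin.lt_def, Fin.le_def]
    rw [this, card_union_of_disjoint, Fin.card_Iio, Fin.card_Ici]
    · simp only [Fin.val_mk]
      omega
    · rw [Finset.disjoint_left]
      intro j hj hj'
      simp only [mem_Iio, mem_Ici, Fin.lt_def, Fin.le_def, Fin.val_mk] at hj hj'
      omega

/-- If the complement of `s` is an interval, then `s` is some `Tset n k i`. -/
lemma tail_case {n k : ℕ} (hk : 0 < k) (hkn : k < n) (x : Fin n → ℝ)
    (s : Finset (Fin n)) (hs : s.card = k) (hC : sᶜ.Nonempty)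
    (hspan : ((sᶜ.max' hC : Fin n) : ℕ) - ((sᶜ.min' hC : Fin n) : ℕ) + 1 ≤ n - k) :
    ∃ i ≤ k, Fv x s ≤ Fv x (Tset n k i) := by
  set C := sᶜ with hCdef
  set u := C.min' hC with hu
  set v := C.max' hC with hv
  have hcC : C.card = n - k := by
    rw [hCdef, card_compl, hs, Fintype.card_fin]
  have hsub : C ⊆ Icc u v := fun j hj => mem_Icc.2 ⟨min'_le _ _ hj, le_max' _ _ hj⟩
  have huv : (u : ℕ) ≤ (v : ℕ) := Fin.le_def.mp (min'_le _ _ (max'_mem _ _))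
  have hicc : (Icc u v).card = (v : ℕ) + 1 - (u : ℕ) := Fin.card_Icc u v
  have hCeq : C = Icc u v := eq_of_subset_of_card_le hsub (by rw [hicc, hcC]; omega)
  have hvu : (v : ℕ) + 1 - (u : ℕ) = n - k := by rw [← hicc, ← hCeq, hcC]
  have hvn : (v : ℕ) < n := v.isLt
  have hukn : (u : ℕ) ≤ k := by omega
  refine ⟨(u : ℕ), hukn, le_of_eq (congrArg (Fv x) ?_)⟩
  ext j
  have h1 : j ∈ s ↔ ¬ j ∈ C := by rw [hCdef, mem_compl, not_not]
  have h2 : j ∈ C ↔ ((u : ℕ) ≤ (j : ℕ) ∧ (j : ℕ) ≤ (v : ℕ)) := by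
    rw [hCeq, mem_Icc, Fin.le_def, Fin.le_def]
  have hjn : (j : ℕ) < n := j.isLt
  rw [h1, h2]
  simp only [Tset, mem_filter, mem_univ, true_and]
  omega

lemma main_ind {n k : ℕ} (hk : 0 < k) (hkn : k < n) (x : Fin n → ℝ) (hmono : Monotone x) :
    ∀ m : ℕ, ∀ s : Finset (Fin n), s.card = k →
      ∀ hC : sᶜ.Nonempty, ((sᶜ.max' hC : Fin n) : ℕ) - ((sᶜ.min' hC : Fin n) : ℕ) ≤ m →
      ∃ i ≤ k, Fv x s ≤ Fv x (Tset n k i) := by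
  intro m
  induction m with
  | zero =>
    intro s hs hC hspan
    exact tail_case hk hkn x s hs hC (by omega)
  | succ m ih =>
    intro s hs hC hspan
    by_cases htail : ((sᶜ.max' hC : Fin n) : ℕ) - ((sᶜ.min' hC : Fin n) : ℕ) + 1 ≤ n - k
    · exact tail_case hk hkn x s hs hC htail
    · push_neg at htail
      set C := sᶜ with hCdef
      set u := C.min' hC with hu
      set v := C.max' hC with hv
      have hcC : C.card = n - k := by rw [hCdef, card_compl, hs, Fintype.card_fin]
      have hsub : C ⊆ Icc u v := fun j hj => mem_Icc.2 ⟨min'_le _ _ hj, le_max' _ _ hj⟩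
      have huv : (u : ℕ) ≤ (v : ℕ) := Fin.le_def.mp (min'_le _ _ (max'_mem _ _))
      have hnotsub : ¬ Icc u v ⊆ C := by
        intro h
        have := card_le_card h
        rw [Fin.card_Icc, hcC] at this
        omega
      rw [Finset.not_subset] at hnotsub
      obtain ⟨q, hqIcc, hqC⟩ := hnotsub
      obtain ⟨hq1, hq2⟩ := mem_Icc.mp hqIcc
      have hqs : q ∈ s := by
        by_contra h
        exact hqC (mem_compl.2 h)
      have humem : u ∈ C := min'_mem _ _
      have hvmem : v ∈ C := max'_mem _ _
      have hus : u ∉ s := mem_compl.1 humem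
      have hvs : v ∉ s := mem_compl.1 hvmem
      have hqu : u < q := lt_of_le_of_ne hq1 (fun h => hqC (h ▸ humem))
      have hqv : q < v := lt_of_le_of_ne hq2 (fun h => hqC (h ▸ hvmem))
      have hk1 : 1 ≤ k := hk
      rcases Fv_swap x hmono s q u v hqs hus hvs hqu hqv with hle | hle
      · -- swap q for u
        set s' := insert u (s.erase q) with hs'def
        have hunot : u ∉ s.erase q := fun h => hus (Finset.mem_of_mem_erase h)
        have hcs' : s'.card = k := by
          rw [hs'def, Finset.card_insert_of_notMem hunot, Finset.card_erase_of_mem hqs, hs]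
          omega
        have hCeq' : s'ᶜ = (insert q C).erase u := by
          rw [hs'def, compl_insert, compl_erase, hCdef]
        have hC' : s'ᶜ.Nonempty := by
          rw [← Finset.card_pos, card_compl, hcs', Fintype.card_fin]
          omega
        have hmem' : ∀ y ∈ s'ᶜ, u < y ∧ y ≤ v := by
          intro y hy
          rw [hCeq', Finset.mem_erase, Finset.mem_insert] at hy
          obtain ⟨hyu, hy2⟩ := hy
          rcases hy2 with rfl | hyC
          · exact ⟨hqu, hqv.le⟩
          · exact ⟨lt_of_le_of_ne (min'_le _ _ hyC) (Ne.symm hyu), le_max' _ _ hyC⟩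
        have hminlt : u < s'ᶜ.min' hC' := (hmem' _ (min'_mem _ hC')).1
        have hmaxle : s'ᶜ.max' hC' ≤ v := max'_le _ hC' _ (fun y hy => (hmem' y hy).2)
        have hspan' : ((s'ᶜ.max' hC' : Fin n) : ℕ) - ((s'ᶜ.min' hC' : Fin n) : ℕ) ≤ m := by
          have h1 := Fin.lt_def.mp hminlt
          have h2 := Fin.le_def.mp hmaxle
          omega
        obtain ⟨i, hik, hF⟩ := ih s' hcs' hC' hspan'
        exact ⟨i, hik, le_trans hle hF⟩
      · -- swap q for v
        set s' := insert v (s.erase q) with hs'def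
        have hvnot : v ∉ s.erase q := fun h => hvs (Finset.mem_of_mem_erase h)
        have hcs' : s'.card = k := by
          rw [hs'def, Finset.card_insert_of_notMem hvnot, Finset.card_erase_of_mem hqs, hs]
          omega
        have hCeq' : s'ᶜ = (insert q C).erase v := by
          rw [hs'def, compl_insert, compl_erase, hCdef]
        have hC' : s'ᶜ.Nonempty := by
          rw [← Finset.card_pos, card_compl, hcs', Fintype.card_fin]
          omega
        have hmem' : ∀ y ∈ s'ᶜ, u ≤ y ∧ y < v := by
          intro y hy
          rw [hCeq', Finset.mem_erase, Finset.mem_insert] at hy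
          obtain ⟨hyv, hy2⟩ := hy
          rcases hy2 with rfl | hyC
          · exact ⟨hqu.le, hqv⟩
          · exact ⟨min'_le _ _ hyC, lt_of_le_of_ne (le_max' _ _ hyC) hyv⟩
        have hminle : u ≤ s'ᶜ.min' hC' := (hmem' _ (min'_mem _ hC')).1
        have hmaxlt : s'ᶜ.max' hC' < v := (hmem' _ (max'_mem _ hC')).2
        have hspan' : ((s'ᶜ.max' hC' : Fin n) : ℕ) - ((s'ᶜ.min' hC' : Fin n) : ℕ) ≤ m := by
          have h1 := Fin.le_def.mp hminle
          have h2 := Fin.lt_def.mp hmaxlt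
          omega
        obtain ⟨i, hik, hF⟩ := ih s' hcs' hC' hspan'
        exact ⟨i, hik, le_trans hle hF⟩

/-- A k-element subset of maximal variance can be taken from the two tails of the
sorted list: the first `i` and the last `k - i` elements, for some `0 ≤ i ≤ k`. -/
theorem max_variance_subset_tails {n k : ℕ} (hk : 0 < k) (hkn : k < n)
    (x : Fin n → ℝ) (hmono : Monotone x) :
    ∃ i ≤ k, ∀ s : Finset (Fin n), s.card = k →
      svar x s ≤
        svar x (univ.filter (fun j : Fin n => (j : ℕ) < i ∨ n - (k - i) ≤ (j : ℕ))) := by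
  obtain ⟨i, hi, hmax⟩ := Finset.exists_max_image (Finset.range (k + 1))
    (fun i => Fv x (Tset n k i)) ⟨0, mem_range.2 (Nat.succ_pos k)⟩
  rw [mem_range] at hi
  have hik : i ≤ k := Nat.lt_succ_iff.mp hi
  refine ⟨i, hik, ?_⟩
  intro s hs
  have hC : sᶜ.Nonempty := by
    rw [← Finset.card_pos, card_compl, hs, Fintype.card_fin]
    omega
  have hbound : ((sᶜ.max' hC : Fin n) : ℕ) - ((sᶜ.min' hC : Fin n) : ℕ) ≤ n := by
    have := (sᶜ.max' hC).isLt
    omega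
  obtain ⟨j, hjk, hF⟩ := main_ind hk hkn x hmono n s hs hC hbound
  have hF2 : Fv x (Tset n k j) ≤ Fv x (Tset n k i) :=
    hmax j (mem_range.2 (Nat.lt_succ_of_le hjk))
  have hcT : (Tset n k i).card = k := card_Tset hk hkn hik
  have e1 : svar x s = Fv x s / (k : ℝ) ^ 2 := svar_eq_Fv hk x s hs
  have e2 : svar x (Tset n k i) = Fv x (Tset n k i) / (k : ℝ) ^ 2 := svar_eq_Fv hk x _ hcT
  have hkpos : (0 : ℝ) < (k : ℝ) ^ 2 := by positivity
  calc svar x s = Fv x s / (k : ℝ) ^ 2 := e1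
    _ ≤ Fv x (Tset n k i) / (k : ℝ) ^ 2 :=
        div_le_div_of_nonneg_right (le_trans hF hF2) hkpos.le
    _ = svar x (Tset n k i) := e2.symm
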